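/- arXiv:0907.3207 — 3 statements merged into one kernel-verified Lean document; each statement's English description precedes it below -/
import Mathlib

section
/- Let (Ω,𝔉,P) be a probability space and for each ε ∈ (0,1] let X_ε : Ω → C([0,1],ℝ^d) be Borel measurable. Suppose that for every open set U ⊆ C([0,1],ℝ^d) one has liminf_{ε→0⁺} ε·log P(X_ε ∈ U) ≥ −inf_{g∈U} I₀(g). Then for every open set G ⊆ C([0,1],ℝ^d), liminf_{ε→0⁺} ε·log P(Φ∘X_ε ∈ G) ≥ −inf_{g∈G} I(g). -/
open MeasureTheory Filter Topology
open scoped ENNReal NNReal Classical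

noncomputable section

variable {d : ℕ}

/-- The hitting-time functional: `τ(f) = min(inf {t ∈ [0,1] : f t ∈ B}, 1)`,
with the convention `inf ∅ = +∞` (realized by adjoining `1` to the set). -/
def hitTime (B : Set (EuclideanSpace ℝ (Fin d)))
    (f : C(unitInterval, EuclideanSpace ℝ (Fin d))) : ℝ :=
  sInf ({t : ℝ | ∃ ht : t ∈ Set.Icc (0 : ℝ) 1, f ⟨t, ht⟩ ∈ B} ∪ {1})

/-- The stopping map `Φ(f)(t) = f(min(t, τ(f)))`. -/
def stopMap (B : Set (EuclideanSpace ℝ (Fin d)))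
    (f : C(unitInterval, EuclideanSpace ℝ (Fin d))) :
    C(unitInterval, EuclideanSpace ℝ (Fin d)) :=
  ⟨fun t => f (Set.projIcc (0 : ℝ) 1 zero_le_one (min t.1 (hitTime B f))),
    f.continuous.comp (continuous_projIcc.comp
      (continuous_subtype_val.min continuous_const))⟩

/-- `g` is absolutely continuous with (a.e.) derivative `g'` lying in `L²([0,1])`. -/
def HasL2Deriv (g : C(unitInterval, EuclideanSpace ℝ (Fin d)))
    (g' : ℝ → EuclideanSpace ℝ (Fin d)) : Prop :=
  MemLp g' 2 (volume.restrict (Set.Icc (0 : ℝ) 1)) ∧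
    ∀ t : unitInterval, g t = g 0 + ∫ s in (0 : ℝ)..(t : ℝ), g' s

/-- The Schilder rate function `I₀`: `(1/2)∫₀¹ ‖g'‖²` if `g(0) = u` and `g` is absolutely
continuous with square-integrable derivative, and `+∞` otherwise. -/
def rate0 (u : EuclideanSpace ℝ (Fin d))
    (g : C(unitInterval, EuclideanSpace ℝ (Fin d))) : ℝ≥0∞ :=
  sInf {c : ℝ≥0∞ | ∃ g' : ℝ → EuclideanSpace ℝ (Fin d), HasL2Deriv g g' ∧ g 0 = u ∧
    c = ENNReal.ofReal ((1 / 2) * ∫ s in Set.Icc (0 : ℝ) 1, ‖g' s‖ ^ 2)}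

/-- The rate function `I`: equal to `I₀` on the range of the stopping map `Φ`,
and `+∞` elsewhere. -/
def rateStopped (B : Set (EuclideanSpace ℝ (Fin d))) (u : EuclideanSpace ℝ (Fin d))
    (g : C(unitInterval, EuclideanSpace ℝ (Fin d))) : ℝ≥0∞ :=
  if g ∈ Set.range (stopMap B) then rate0 u g else ⊤

instance : MeasurableSpace C(unitInterval, EuclideanSpace ℝ (Fin d)) := borel _
instance : BorelSpace C(unitInterval, EuclideanSpace ℝ (Fin d)) := ⟨rfl⟩



namespace StoppedLDP

open intervalIntegral


local notation "E𝕕" => EuclideanSpace ℝ (Fin d)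

def pro (x : ℝ) : unitInterval := Set.projIcc (0:ℝ) 1 zero_le_one x

lemma pro_coe {x : ℝ} (hx : x ∈ Set.Icc (0:ℝ) 1) : ((pro x : unitInterval) : ℝ) = x := by
  simp [pro, Set.projIcc_of_mem, hx]

lemma pro_val (t : unitInterval) : pro (t : ℝ) = t := by
  ext; exact pro_coe t.2

def hitSet (B : Set E𝕕) (f : C(unitInterval, E𝕕)) : Set ℝ :=
  {t : ℝ | ∃ ht : t ∈ Set.Icc (0 : ℝ) 1, f ⟨t, ht⟩ ∈ B} ∪ {1}

lemma hitTime_eq (B : Set E𝕕) (f : C(unitInterval, E𝕕)) : hitTime B f = sInf (hitSet B f) := rfl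

lemma one_mem_hitSet (B : Set E𝕕) (f : C(unitInterval, E𝕕)) : (1:ℝ) ∈ hitSet B f :=
  Or.inr rfl

lemma hitSet_subset (B : Set E𝕕) (f : C(unitInterval, E𝕕)) :
    hitSet B f ⊆ Set.Icc (0:ℝ) 1 := by
  rintro t (⟨ht, _⟩ | ht)
  · exact ht
  · simp only [Set.mem_singleton_iff] at ht
    subst ht; exact ⟨zero_le_one, le_rfl⟩

lemma hitSet_closed {B : Set E𝕕} (hB : IsClosed B) (f : C(unitInterval, E𝕕)) :
    IsClosed (hitSet B f) := by
  have h1 : {t : ℝ | ∃ ht : t ∈ Set.Icc (0 : ℝ) 1, f ⟨t, ht⟩ ∈ B}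
      = Subtype.val '' ((⇑f) ⁻¹' B) := by
    ext t
    constructor
    · rintro ⟨ht, hm⟩; exact ⟨⟨t, ht⟩, hm, rfl⟩
    · rintro ⟨⟨s, hs⟩, hm, rfl⟩; exact ⟨hs, hm⟩
  have h2 : IsCompact ((⇑f) ⁻¹' B) := (hB.preimage f.continuous).isCompact
  have h3 : IsClosed (Subtype.val '' ((⇑f) ⁻¹' B)) :=
    (h2.image continuous_subtype_val).isClosed
  rw [hitSet, h1]
  exact h3.union isClosed_singleton

lemma hitTime_mem {B : Set E𝕕} (hB : IsClosed B) (f : C(unitInterval, E𝕕)) :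
    hitTime B f ∈ hitSet B f := by
  rw [hitTime_eq]
  exact (hitSet_closed hB f).csInf_mem ⟨1, one_mem_hitSet B f⟩
    ⟨0, fun x hx => (hitSet_subset B f hx).1⟩

lemma hitTime_mem_Icc {B : Set E𝕕} (hB : IsClosed B) (f : C(unitInterval, E𝕕)) :
    hitTime B f ∈ Set.Icc (0:ℝ) 1 :=
  hitSet_subset B f (hitTime_mem hB f)

lemma hitTime_le {B : Set E𝕕} (f : C(unitInterval, E𝕕)) {t : ℝ} (ht : t ∈ hitSet B f) :
    hitTime B f ≤ t :=
  csInf_le ⟨0, fun x hx => (hitSet_subset B f hx).1⟩ ht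

lemma not_mem_of_lt_hitTime {B : Set E𝕕} {f : C(unitInterval, E𝕕)} {t : unitInterval}
    (ht : (t:ℝ) < hitTime B f) : f t ∉ B := by
  intro hmem
  have : (t:ℝ) ∈ hitSet B f := Or.inl ⟨t.2, by simpa [Subtype.coe_eta] using hmem⟩
  exact absurd (hitTime_le f this) (not_le.mpr ht)

lemma lt_hitTime_of_forall {B : Set E𝕕} (hB : IsClosed B) {f : C(unitInterval, E𝕕)} {a : ℝ}
    (ha : a < 1) (h : ∀ t : unitInterval, (t:ℝ) ≤ a → f t ∉ B) : a < hitTime B f := by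
  rcases hitTime_mem hB f with ⟨hmem, hfB⟩ | h1
  · by_contra hcon
    push_neg at hcon
    exact h ⟨hitTime B f, hmem⟩ hcon hfB
  · simp only [Set.mem_singleton_iff] at h1
    rw [h1]; exact ha

lemma stopMap_apply (B : Set E𝕕) (f : C(unitInterval, E𝕕)) (t : unitInterval) :
    stopMap B f t = f (pro (min (t:ℝ) (hitTime B f))) := rfl

lemma stopMap_eq_self {B : Set E𝕕} {f : C(unitInterval, E𝕕)} (hB : IsClosed B)
    (h : ∀ t : unitInterval, f t ∉ B) : stopMap B f = f := by
  have h1 : hitTime B f = 1 := by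
    rcases hitTime_mem hB f with ⟨hmem, hfB⟩ | h1
    · exact absurd hfB (h _)
    · simpa using h1
  ext t
  rw [stopMap_apply, h1, min_eq_left t.2.2, pro_val]



/-- `g` is frozen from time `τ` on, with the appropriate hitting behaviour. -/
def IsStoppedPath (B : Set E𝕕) (g : C(unitInterval, E𝕕)) (τ : ℝ) : Prop :=
  τ ∈ Set.Icc (0:ℝ) 1 ∧
  (∀ t : unitInterval, g t = g (pro (min (t:ℝ) τ))) ∧
  ((∀ t : unitInterval, g t ∉ B) ∨
    (g (pro τ) ∈ B ∧ ∀ t : unitInterval, (t:ℝ) < τ → g t ∉ B))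

lemma isStoppedPath_of_mem_range {B : Set E𝕕} (hB : IsClosed B)
    {g : C(unitInterval, E𝕕)} (hg : g ∈ Set.range (stopMap B)) :
    ∃ τ, IsStoppedPath B g τ := by
  obtain ⟨f, rfl⟩ := hg
  have hτI : hitTime B f ∈ Set.Icc (0:ℝ) 1 := hitTime_mem_Icc hB f
  set τ := hitTime B f with hτdef
  refine ⟨τ, hτI, ?_, ?_⟩
  · intro t
    have hmem : min (t:ℝ) τ ∈ Set.Icc (0:ℝ) 1 :=
      ⟨le_min t.2.1 hτI.1, min_le_of_left_le t.2.2⟩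
    conv_lhs => rw [stopMap_apply]
    conv_rhs => rw [stopMap_apply]
    rw [pro_coe hmem, ← hτdef, min_assoc, min_self]
  · by_cases hhit : f (pro τ) ∈ B
    · right
      constructor
      · have : stopMap B f (pro τ) = f (pro τ) := by
          rw [stopMap_apply]
          congr 1
          rw [pro_coe hτI, min_self]
        rw [this]; exact hhit
      · intro t ht
        rw [stopMap_apply]
        have : min (t:ℝ) τ = (t:ℝ) := min_eq_left ht.le
        rw [this, pro_val]
        exact not_mem_of_lt_hitTime ht
    · left
      have h1 : τ = 1 := by
        rcases hitTime_mem hB f with ⟨hmem, hfB⟩ | h1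
        · exfalso
          apply hhit
          have : pro τ = ⟨τ, hmem⟩ := by ext; exact pro_coe hmem
          rw [this]; exact hfB
        · simpa using h1
      intro t
      rw [stopMap_apply]
      have hmin : min (t:ℝ) τ = (t:ℝ) := min_eq_left (h1 ▸ t.2.2)
      rw [hmin, pro_val]
      rcases lt_or_eq_of_le (h1 ▸ t.2.2 : (t:ℝ) ≤ τ) with h | h
      · exact not_mem_of_lt_hitTime h
      · have : t = pro τ := by ext; rw [pro_coe hτI]; exact h
        rw [this]; exact hhit

/-- Main pointwise estimate in the "hit" case. -/
lemma stop_close {B : Set E𝕕} (hB : IsClosed B) (g h : C(unitInterval, E𝕕))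
    {τ θ r c : ℝ} (hτ1 : τ ≤ 1) (hθ : 0 < θ) (hθτ : θ ≤ τ)
    (hfreeze : ∀ t : unitInterval, g t = g (pro (min (t:ℝ) τ)))
    (hmod : ∀ s t : unitInterval, |(s:ℝ) - t| ≤ θ → ‖g s - g t‖ ≤ c)
    (hclose : ∀ t : unitInterval, ‖h t - g t‖ ≤ r)
    (hnohit : ∀ t : unitInterval, (t:ℝ) ≤ τ - θ → h t ∉ B) :
    ∀ t : unitInterval, ‖stopMap B h t - g t‖ ≤ r + c := by
  intro t
  set τh := hitTime B h with hτhdef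
  have hτhI : τh ∈ Set.Icc (0:ℝ) 1 := hitTime_mem_Icc hB h
  have hτhgt : τ - θ < τh := lt_hitTime_of_forall hB (by linarith) hnohit
  set m : unitInterval := pro (min (t:ℝ) τh) with hmdef
  have hmem : min (t:ℝ) τh ∈ Set.Icc (0:ℝ) 1 := ⟨le_min t.2.1 hτhI.1, min_le_of_left_le t.2.2⟩
  have hmcoe : (m:ℝ) = min (t:ℝ) τh := pro_coe hmem
  have h1 : stopMap B h t = h m := rfl
  have h2 : ‖h m - g m‖ ≤ r := hclose m
  have h3 : ‖g m - g t‖ ≤ c := by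
    rw [hfreeze m, hfreeze t]
    apply hmod
    have hma : min ((m:ℝ)) τ ∈ Set.Icc (0:ℝ) 1 := ⟨le_min m.2.1 (by linarith), min_le_of_left_le m.2.2⟩
    have hmb : min ((t:ℝ)) τ ∈ Set.Icc (0:ℝ) 1 := ⟨le_min t.2.1 (by linarith), min_le_of_left_le t.2.2⟩
    rw [pro_coe hma, pro_coe hmb]
    rw [hmcoe]
    rcases le_or_gt (t:ℝ) τh with hle | hlt
    · rw [min_eq_left hle]
      simp [abs_nonneg, hθ.le]
    · rw [min_eq_right hlt.le]
      have hab : min τh τ ≤ min (t:ℝ) τ := min_le_min hlt.le le_rfl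
      have h5 : τ - θ < min τh τ := lt_min hτhgt (by linarith)
      have h6 : min (t:ℝ) τ ≤ τ := min_le_right _ _
      rw [abs_sub_comm, abs_of_nonneg (by linarith)]
      linarith
  calc ‖stopMap B h t - g t‖ = ‖(h m - g m) + (g m - g t)‖ := by rw [h1, sub_add_sub_cancel]
    _ ≤ ‖h m - g m‖ + ‖g m - g t‖ := norm_add_le _ _
    _ ≤ r + c := add_le_add h2 h3

/-- Estimate in the constant case. -/
lemma stop_close_const {B : Set E𝕕} (g h : C(unitInterval, E𝕕)) {r : ℝ}
    (hconst : ∀ t : unitInterval, g t = g 0)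
    (hclose : ∀ t : unitInterval, ‖h t - g t‖ ≤ r) :
    ∀ t : unitInterval, ‖stopMap B h t - g t‖ ≤ r := by
  intro t
  have h1 : stopMap B h t = h (pro (min (t:ℝ) (hitTime B h))) := rfl
  rw [h1, hconst t, ← hconst (pro (min (t:ℝ) (hitTime B h)))]
  exact hclose _



/-- modulus of continuity -/
lemma exists_modulus (g : C(unitInterval, E𝕕)) {c : ℝ} (hc : 0 < c) :
    ∃ θ : ℝ, 0 < θ ∧ ∀ s t : unitInterval, |(s:ℝ) - t| ≤ θ → ‖g s - g t‖ ≤ c := by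
  have huc : UniformContinuous g := CompactSpace.uniformContinuous_of_continuous g.continuous
  rw [Metric.uniformContinuous_iff] at huc
  obtain ⟨δ, hδ, hδ'⟩ := huc c hc
  refine ⟨δ/2, by linarith, fun s t hst => ?_⟩
  have : dist s t < δ := by
    rw [Subtype.dist_eq, Real.dist_eq]; linarith
  have := hδ' this
  rw [dist_eq_norm] at this
  exact this.le

def vvec (g : C(unitInterval, EuclideanSpace ℝ (Fin d))) (τ θ : ℝ) :
    EuclideanSpace ℝ (Fin d) := θ⁻¹ • (g (pro τ) - g (pro (τ - θ)))

def gmod (g : C(unitInterval, EuclideanSpace ℝ (Fin d))) (τ θ : ℝ) :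
    C(unitInterval, EuclideanSpace ℝ (Fin d)) :=
  ⟨fun t => g (pro (min t.1 (τ - θ))) + (min t.1 τ - min t.1 (τ - θ)) • vvec g τ θ,
    ((g.continuous.comp (continuous_projIcc.comp
        (continuous_subtype_val.min continuous_const))).add
      (((continuous_subtype_val.min continuous_const).sub
        (continuous_subtype_val.min continuous_const)).smul continuous_const))⟩

def gder (g : C(unitInterval, EuclideanSpace ℝ (Fin d))) (τ θ : ℝ)
    (g' : ℝ → EuclideanSpace ℝ (Fin d)) : ℝ → EuclideanSpace ℝ (Fin d) := fun s =>
  if s < τ - θ then g' s else if s < τ then vvec g τ θ else 0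

variable {g : C(unitInterval, EuclideanSpace ℝ (Fin d))} {τ θ : ℝ}

lemma gmod_apply (g : C(unitInterval, EuclideanSpace ℝ (Fin d))) (τ θ : ℝ) (t : unitInterval) :
    gmod g τ θ t = g (pro (min t.1 (τ - θ))) + (min t.1 τ - min t.1 (τ - θ)) • vvec g τ θ := rfl

lemma gmod_apply_of_le (hθ : 0 ≤ θ) (hθτ : θ ≤ τ) {t : unitInterval} (h : (t:ℝ) ≤ τ - θ) :
    gmod g τ θ t = g t := by
  rw [gmod_apply, min_eq_left h, min_eq_left (by linarith : (t:ℝ) ≤ τ), sub_self, zero_smul,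
    add_zero, pro_val]

lemma gmod_zero (hθ : 0 ≤ θ) (hθτ : θ ≤ τ) : gmod g τ θ 0 = g 0 := by
  have h0 : ((0:unitInterval):ℝ) = 0 := rfl
  exact gmod_apply_of_le hθ hθτ (by rw [h0]; linarith)

lemma gmod_close (hθ : 0 < θ) (hθτ : θ ≤ τ) (hτ1 : τ ≤ 1) {c : ℝ} (hc : 0 ≤ c)
    (hfreeze : ∀ t : unitInterval, g t = g (pro (min (t:ℝ) τ)))
    (hmod : ∀ s t : unitInterval, |(s:ℝ) - t| ≤ θ → ‖g s - g t‖ ≤ c) :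
    ∀ t : unitInterval, ‖gmod g τ θ t - g t‖ ≤ 2 * c := by
  intro t
  have hτθI : τ - θ ∈ Set.Icc (0:ℝ) 1 := ⟨by linarith, by linarith⟩
  have hτI : τ ∈ Set.Icc (0:ℝ) 1 := ⟨by linarith, hτ1⟩
  have hm1 : min (t:ℝ) (τ - θ) ∈ Set.Icc (0:ℝ) 1 := ⟨le_min t.2.1 hτθI.1, min_le_of_left_le t.2.2⟩
  have hm2 : min (t:ℝ) τ ∈ Set.Icc (0:ℝ) 1 := ⟨le_min t.2.1 hτI.1, min_le_of_left_le t.2.2⟩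
  have e1 : ‖g (pro (min t.1 (τ - θ))) - g (pro (min t.1 τ))‖ ≤ c := by
    apply hmod
    rw [pro_coe hm1, pro_coe hm2]
    rw [abs_sub_comm, abs_of_nonneg (sub_nonneg.2 (min_le_min le_rfl (by linarith)))]
    have : min (t:ℝ) τ ≤ min (t:ℝ) (τ - θ) + θ := by
      rcases le_or_gt (t:ℝ) (τ-θ) with h | h
      · rw [min_eq_left h]; exact le_add_of_le_of_nonneg (min_le_left _ _) hθ.le
      · rw [min_eq_right h.le]; have := min_le_right (t:ℝ) τ; linarith
    linarith
  have e2 : ‖(min t.1 τ - min t.1 (τ - θ)) • vvec g τ θ‖ ≤ c := by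
    rw [norm_smul, Real.norm_eq_abs]
    have hv : ‖vvec g τ θ‖ ≤ θ⁻¹ * c := by
      rw [vvec, norm_smul, Real.norm_eq_abs, abs_of_nonneg (by positivity)]
      have := hmod (pro τ) (pro (τ - θ)) (by rw [pro_coe hτI, pro_coe hτθI]; simp [abs_of_nonneg hθ.le])
      exact mul_le_mul_of_nonneg_left this (by positivity)
    have habs : |min t.1 τ - min t.1 (τ - θ)| ≤ θ := by
      rw [abs_of_nonneg (by exact sub_nonneg.2 (min_le_min le_rfl (by linarith)))]
      rcases le_or_gt (t:ℝ) (τ-θ) with h | h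
      · rw [min_eq_left h, min_eq_left (by linarith : (t:ℝ) ≤ τ)]; linarith
      · rw [min_eq_right h.le]; have := min_le_right (t:ℝ) τ; linarith
    calc |min t.1 τ - min t.1 (τ - θ)| * ‖vvec g τ θ‖ ≤ θ * (θ⁻¹ * c) := by
          apply mul_le_mul habs hv (norm_nonneg _) hθ.le
      _ = c := by field_simp
  calc ‖gmod g τ θ t - g t‖
      = ‖(g (pro (min t.1 (τ - θ))) - g (pro (min t.1 τ))) + (min t.1 τ - min t.1 (τ - θ)) • vvec g τ θ‖ := by
        rw [gmod_apply, hfreeze t]; congr 1; abel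
    _ ≤ ‖g (pro (min t.1 (τ - θ))) - g (pro (min t.1 τ))‖ + ‖(min t.1 τ - min t.1 (τ - θ)) • vvec g τ θ‖ := norm_add_le _ _
    _ ≤ c + c := add_le_add e1 e2
    _ = 2 * c := by ring

lemma gmod_nohit {B : Set E𝕕} (hθ : 0 < θ) (hθτ : θ ≤ τ)
    (hbefore : ∀ t : unitInterval, (t:ℝ) < τ → g t ∉ B) :
    ∀ t : unitInterval, (t:ℝ) ≤ τ - θ → gmod g τ θ t ∉ B := by
  intro t ht
  rw [gmod_apply_of_le hθ.le hθτ ht]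
  exact hbefore t (by linarith)

lemma memLp_gder (τ θ : ℝ) (hθ : 0 < θ) {g' : ℝ → E𝕕}
    (hg' : MemLp g' 2 (volume.restrict (Set.Icc (0:ℝ) 1))) :
    MemLp (gder g τ θ g') 2 (volume.restrict (Set.Icc (0:ℝ) 1)) := by
  have heq : gder g τ θ g' = (Set.Iio (τ - θ)).indicator g' +
      (Set.Ico (τ - θ) τ).indicator (fun _ => vvec g τ θ) := by
    funext s
    by_cases h1 : s < τ - θ
    · simp [gder, h1, Set.indicator_apply, Set.mem_Iio, Set.mem_Ico, not_le.2 h1]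
    · by_cases h2 : s < τ
      · simp [gder, h1, h2, Set.indicator_apply, Set.mem_Iio, Set.mem_Ico, not_lt.1 h1]
      · simp [gder, h1, h2, Set.indicator_apply, Set.mem_Iio, Set.mem_Ico]
  rw [heq]
  exact (hg'.indicator measurableSet_Iio).add
    ((memLp_const (vvec g τ θ)).indicator measurableSet_Ico)

lemma intervalIntegrable_of_Icc01 {E' : Type*} [NormedAddCommGroup E'] {F : ℝ → E'}
    (hF : IntegrableOn F (Set.Icc (0:ℝ) 1) volume) {a b : ℝ}
    (h0 : 0 ≤ a) (hab : a ≤ b) (hb1 : b ≤ 1) : IntervalIntegrable F volume a b := by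
  rw [intervalIntegrable_iff_integrableOn_Icc_of_le hab]
  exact hF.mono_set (Set.Icc_subset_Icc h0 hb1)

lemma ae_ne_vol (x : ℝ) : ∀ᵐ s : ℝ, s ≠ x := by
  have h0 : (volume : Measure ℝ) {x} = 0 := measure_singleton _
  filter_upwards [measure_eq_zero_iff_ae_notMem.1 h0] with s hs
  simpa using hs

lemma gder_integral_left (hθ : 0 < θ) {g' : ℝ → E𝕕} {b : ℝ} (hb0 : 0 ≤ b) (hb : b ≤ τ - θ) :
    ∫ s in (0:ℝ)..b, gder g τ θ g' s = ∫ s in (0:ℝ)..b, g' s := by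
  apply intervalIntegral.integral_congr_ae
  filter_upwards [ae_ne_vol (τ - θ)] with s hs hmem
  rw [Set.uIoc_of_le hb0] at hmem
  have : s < τ - θ := lt_of_le_of_ne (hmem.2.trans hb) hs
  simp [gder, this]

lemma gder_integral_mid (hθ : 0 < θ) {g' : ℝ → E𝕕} {a b : ℝ}
    (ha : τ - θ ≤ a) (hab : a ≤ b) (hb : b ≤ τ) :
    ∫ s in a..b, gder g τ θ g' s = (b - a) • vvec g τ θ := by
  rw [← intervalIntegral.integral_const (vvec g τ θ)]
  apply intervalIntegral.integral_congr_ae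
  filter_upwards [ae_ne_vol τ] with s hs hmem
  rw [Set.uIoc_of_le hab] at hmem
  have h1 : ¬ s < τ - θ := not_lt.2 (le_of_lt (lt_of_le_of_lt ha hmem.1))
  have h2 : s < τ := lt_of_le_of_ne (hmem.2.trans hb) hs
  simp [gder, h1, h2]

lemma gder_integral_right {g' : ℝ → E𝕕} {a b : ℝ} (hθ : 0 ≤ θ) (ha : τ ≤ a) (hab : a ≤ b) :
    ∫ s in a..b, gder g τ θ g' s = 0 := by
  rw [← intervalIntegral.integral_zero (a := a) (b := b) (μ := volume) (E := E𝕕)]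
  apply intervalIntegral.integral_congr
  intro s hsm
  rw [Set.uIcc_of_le hab] at hsm
  have h1 : ¬ s < τ - θ := not_lt.2 (by linarith [hsm.1])
  have h2 : ¬ s < τ := not_lt.2 (le_trans ha hsm.1)
  simp [gder, h1, h2]

lemma hasL2Deriv_gmod (hθ : 0 < θ) (hθτ : θ ≤ τ) (hτ1 : τ ≤ 1)
    {g' : ℝ → E𝕕} (hg' : HasL2Deriv g g') :
    HasL2Deriv (gmod g τ θ) (gder g τ θ g') := by
  have hσ0 : (0:ℝ) ≤ τ - θ := by linarith
  have hσ1 : τ - θ ≤ 1 := by linarith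
  have hτ0 : (0:ℝ) ≤ τ := by linarith
  have hmem2 := memLp_gder (g := g) τ θ hθ hg'.1
  have hIgd : IntegrableOn (gder g τ θ g') (Set.Icc (0:ℝ) 1) volume :=
    hmem2.integrable one_le_two
  have hproσ : ((pro (τ - θ) : unitInterval) : ℝ) = τ - θ := pro_coe ⟨hσ0, hσ1⟩
  have hgσ : g (pro (τ - θ)) = g 0 + ∫ s in (0:ℝ)..(τ - θ), g' s := by
    have := hg'.2 (pro (τ - θ)); rwa [hproσ] at this
  refine ⟨hmem2, fun t => ?_⟩
  have hg0 : gmod g τ θ 0 = g 0 := gmod_zero hθ.le hθτ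
  rcases le_or_gt (t:ℝ) (τ - θ) with h | h
  · rw [gmod_apply_of_le hθ.le hθτ h, hg0, gder_integral_left hθ t.2.1 h, ← hg'.2 t]
  · have key1 : IntervalIntegrable (gder g τ θ g') volume 0 (τ - θ) :=
      intervalIntegrable_of_Icc01 hIgd le_rfl hσ0 hσ1
    rcases le_or_gt (t:ℝ) τ with h2 | h2
    · have key2 : IntervalIntegrable (gder g τ θ g') volume (τ - θ) (t:ℝ) :=
        intervalIntegrable_of_Icc01 hIgd hσ0 h.le t.2.2
      rw [hg0, ← intervalIntegral.integral_add_adjacent_intervals key1 key2,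
        gder_integral_left hθ hσ0 le_rfl, gder_integral_mid hθ le_rfl h.le h2,
        gmod_apply, min_eq_right h.le, min_eq_left h2, hgσ]
      abel
    · have key2 : IntervalIntegrable (gder g τ θ g') volume (τ - θ) τ :=
        intervalIntegrable_of_Icc01 hIgd hσ0 (by linarith) hτ1
      have key3 : IntervalIntegrable (gder g τ θ g') volume τ (t:ℝ) :=
        intervalIntegrable_of_Icc01 hIgd hτ0 h2.le t.2.2
      rw [hg0, ← intervalIntegral.integral_add_adjacent_intervals (key1.trans key2) key3,
        ← intervalIntegral.integral_add_adjacent_intervals key1 key2,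
        gder_integral_left hθ hσ0 le_rfl, gder_integral_mid hθ le_rfl (by linarith) le_rfl,
        gder_integral_right hθ.le le_rfl h2.le,
        gmod_apply, min_eq_right (by linarith : τ - θ ≤ (t:ℝ)), min_eq_right h2.le, hgσ]
      abel

lemma energy_gmod (hθ : 0 < θ) (hθτ : θ ≤ τ) (hτ1 : τ ≤ 1)
    {g' : ℝ → E𝕕} (hg' : HasL2Deriv g g') :
    ∫ s in Set.Icc (0:ℝ) 1, ‖gder g τ θ g' s‖ ^ 2 ≤ ∫ s in Set.Icc (0:ℝ) 1, ‖g' s‖ ^ 2 := by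
  have hσ0 : (0:ℝ) ≤ τ - θ := by linarith
  have hσ1 : τ - θ ≤ 1 := by linarith
  have hστ : τ - θ ≤ τ := by linarith
  have hτ0 : (0:ℝ) ≤ τ := by linarith
  have hmem2 := memLp_gder (g := g) τ θ hθ hg'.1
  -- integrability of the squares
  have hFg : IntegrableOn (fun s => ‖g' s‖ ^ 2) (Set.Icc (0:ℝ) 1) volume :=
    hg'.1.norm.integrable_sq
  have hFd : IntegrableOn (fun s => ‖gder g τ θ g' s‖ ^ 2) (Set.Icc (0:ℝ) 1) volume :=
    hmem2.norm.integrable_sq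
  have cIcc : ∀ (F : ℝ → ℝ), ∫ s in Set.Icc (0:ℝ) 1, F s = ∫ s in (0:ℝ)..1, F s := by
    intro F
    rw [intervalIntegral.integral_of_le zero_le_one, integral_Icc_eq_integral_Ioc]
  rw [cIcc, cIcc]
  -- split both integrals
  have splitg : ∫ s in (0:ℝ)..1, ‖g' s‖ ^ 2 =
      (∫ s in (0:ℝ)..(τ - θ), ‖g' s‖ ^ 2) + (∫ s in (τ - θ)..τ, ‖g' s‖ ^ 2)
        + ∫ s in τ..1, ‖g' s‖ ^ 2 := by
    have h12 := intervalIntegral.integral_add_adjacent_intervals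
        (intervalIntegrable_of_Icc01 hFg le_rfl hσ0 hσ1)
        (intervalIntegrable_of_Icc01 hFg hσ0 hστ hτ1)
    have h123 := intervalIntegral.integral_add_adjacent_intervals
        ((intervalIntegrable_of_Icc01 hFg le_rfl hσ0 hσ1).trans
          (intervalIntegrable_of_Icc01 hFg hσ0 hστ hτ1))
        (intervalIntegrable_of_Icc01 hFg hτ0 hτ1 le_rfl)
    linarith
  have splitd : ∫ s in (0:ℝ)..1, ‖gder g τ θ g' s‖ ^ 2 =
      (∫ s in (0:ℝ)..(τ - θ), ‖gder g τ θ g' s‖ ^ 2)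
        + (∫ s in (τ - θ)..τ, ‖gder g τ θ g' s‖ ^ 2)
        + ∫ s in τ..1, ‖gder g τ θ g' s‖ ^ 2 := by
    have h12 := intervalIntegral.integral_add_adjacent_intervals
        (intervalIntegrable_of_Icc01 hFd le_rfl hσ0 hσ1)
        (intervalIntegrable_of_Icc01 hFd hσ0 hστ hτ1)
    have h123 := intervalIntegral.integral_add_adjacent_intervals
        ((intervalIntegrable_of_Icc01 hFd le_rfl hσ0 hσ1).trans
          (intervalIntegrable_of_Icc01 hFd hσ0 hστ hτ1))
        (intervalIntegrable_of_Icc01 hFd hτ0 hτ1 le_rfl)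
    linarith
  rw [splitg, splitd]
  -- first pieces are a.e. equal
  have e1 : ∫ s in (0:ℝ)..(τ - θ), ‖gder g τ θ g' s‖ ^ 2
      = ∫ s in (0:ℝ)..(τ - θ), ‖g' s‖ ^ 2 := by
    apply intervalIntegral.integral_congr_ae
    filter_upwards [ae_ne_vol (τ - θ)] with s hs hmem
    rw [Set.uIoc_of_le hσ0] at hmem
    have : s < τ - θ := lt_of_le_of_ne hmem.2 hs
    simp [gder, this]
  -- third piece of gder is zero
  have e3 : ∫ s in τ..1, ‖gder g τ θ g' s‖ ^ 2 = 0 := by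
    rw [← intervalIntegral.integral_zero (a := τ) (b := (1:ℝ)) (μ := volume) (E := ℝ)]
    apply intervalIntegral.integral_congr
    intro s hsm
    rw [Set.uIcc_of_le hτ1] at hsm
    have h1 : ¬ s < τ - θ := not_lt.2 (by linarith [hsm.1])
    have h2 : ¬ s < τ := not_lt.2 hsm.1
    simp [gder, h1, h2]
  have e3' : (0:ℝ) ≤ ∫ s in τ..1, ‖g' s‖ ^ 2 :=
    intervalIntegral.integral_nonneg hτ1 (fun s _ => by positivity)
  -- middle piece: Cauchy-Schwarz
  have e2 : ∫ s in (τ - θ)..τ, ‖gder g τ θ g' s‖ ^ 2 ≤ ∫ s in (τ - θ)..τ, ‖g' s‖ ^ 2 := by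
    have hmid : ∫ s in (τ - θ)..τ, ‖gder g τ θ g' s‖ ^ 2 = θ * ‖vvec g τ θ‖ ^ 2 := by
      have : ∫ s in (τ - θ)..τ, ‖gder g τ θ g' s‖ ^ 2
          = ∫ _ in (τ - θ)..τ, ‖vvec g τ θ‖ ^ 2 := by
        apply intervalIntegral.integral_congr_ae
        filter_upwards [ae_ne_vol τ] with s hs hmem
        rw [Set.uIoc_of_le hστ] at hmem
        have h1 : ¬ s < τ - θ := not_lt.2 hmem.1.le
        have h2 : s < τ := lt_of_le_of_ne hmem.2 hs
        simp [gder, h1, h2]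
      rw [this, intervalIntegral.integral_const, smul_eq_mul]
      ring_nf
    rw [hmid]
    -- the displacement equals the integral of g'
    have hproσ : ((pro (τ - θ) : unitInterval) : ℝ) = τ - θ := pro_coe ⟨hσ0, hσ1⟩
    have hproτ : ((pro τ : unitInterval) : ℝ) = τ := pro_coe ⟨hτ0, hτ1⟩
    have hD : g (pro τ) - g (pro (τ - θ)) = ∫ s in (τ - θ)..τ, g' s := by
      have e1' := hg'.2 (pro (τ - θ))
      have e2' := hg'.2 (pro τ)
      rw [hproσ] at e1'
      rw [hproτ] at e2'
      have hIg : IntegrableOn g' (Set.Icc (0:ℝ) 1) volume := hg'.1.integrable one_le_two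
      rw [e1', e2', add_sub_add_left_eq_sub,
        intervalIntegral.integral_interval_sub_left
          (intervalIntegrable_of_Icc01 hIg le_rfl hτ0 hτ1)
          (intervalIntegrable_of_Icc01 hIg le_rfl hσ0 hσ1)]
    -- Cauchy-Schwarz on [τ-θ, τ]
    set μ : Measure ℝ := volume.restrict (Set.Ioc (τ - θ) τ) with hμdef
    have hμle : μ ≤ volume.restrict (Set.Icc (0:ℝ) 1) :=
      Measure.restrict_mono (Set.Ioc_subset_Icc_self.trans (Set.Icc_subset_Icc hσ0 hτ1)) le_rfl
    have hf2 : MemLp (fun s => ‖g' s‖) 2 μ := (hg'.1.norm).mono_measure hμle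
    have hcs := MeasureTheory.integral_mul_le_Lp_mul_Lq_of_nonneg
      Real.HolderConjugate.two_two
      (f := fun s => ‖g' s‖) (g := fun _ => (1:ℝ)) (μ := μ)
      (Filter.Eventually.of_forall fun s => norm_nonneg _)
      (Filter.Eventually.of_forall fun s => zero_le_one)
      (by rw [ENNReal.ofReal_ofNat]; exact hf2)
      (by rw [ENNReal.ofReal_ofNat]; exact memLp_const 1)
    simp only [mul_one, Real.rpow_two, one_pow] at hcs
    rw [← Real.sqrt_eq_rpow, ← Real.sqrt_eq_rpow] at hcs
    have hμuniv : ∫ _ : ℝ, (1:ℝ) ∂μ = θ := by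
      rw [MeasureTheory.integral_const, smul_eq_mul, mul_one, hμdef, measureReal_def, Measure.restrict_apply_univ,
        Real.volume_Ioc, ENNReal.toReal_ofReal (by linarith)]
      ring_nf
    rw [hμuniv] at hcs
    have hintnorm : ∫ s in (τ - θ)..τ, ‖g' s‖ = ∫ s, ‖g' s‖ ∂μ := by
      rw [intervalIntegral.integral_of_le hστ]
    have hintsq : ∫ s in (τ - θ)..τ, ‖g' s‖ ^ 2 = ∫ s, ‖g' s‖ ^ 2 ∂μ := by
      rw [intervalIntegral.integral_of_le hστ]
    have hA : (0:ℝ) ≤ ∫ s, ‖g' s‖ ^ 2 ∂μ := integral_nonneg fun s => by positivity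
    have hL : ‖∫ s in (τ - θ)..τ, g' s‖ ≤ ∫ s, ‖g' s‖ ∂μ := by
      rw [← hintnorm]
      exact intervalIntegral.norm_integral_le_integral_norm hστ
    -- put everything together
    have hvnorm : ‖vvec g τ θ‖ = θ⁻¹ * ‖g (pro τ) - g (pro (τ - θ))‖ := by
      rw [vvec, norm_smul, Real.norm_eq_abs, abs_of_nonneg (by positivity)]
    have hDA : ‖g (pro τ) - g (pro (τ - θ))‖ ^ 2 ≤ θ * ∫ s, ‖g' s‖ ^ 2 ∂μ := by
      have h1 : ‖g (pro τ) - g (pro (τ - θ))‖ ≤ Real.sqrt (∫ s, ‖g' s‖ ^ 2 ∂μ) * Real.sqrt θ := by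
        rw [hD]; exact hL.trans hcs
      have h2 : (Real.sqrt (∫ s, ‖g' s‖ ^ 2 ∂μ) * Real.sqrt θ) ^ 2
          = (∫ s, ‖g' s‖ ^ 2 ∂μ) * θ := by
        rw [mul_pow, Real.sq_sqrt hA, Real.sq_sqrt hθ.le]
      calc ‖g (pro τ) - g (pro (τ - θ))‖ ^ 2
          ≤ (Real.sqrt (∫ s, ‖g' s‖ ^ 2 ∂μ) * Real.sqrt θ) ^ 2 := by
            apply pow_le_pow_left₀ (norm_nonneg _) h1
        _ = (∫ s, ‖g' s‖ ^ 2 ∂μ) * θ := h2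
        _ ≤ θ * ∫ s, ‖g' s‖ ^ 2 ∂μ := by rw [mul_comm]
    rw [hintsq, hvnorm]
    have hθ2 : θ * (θ⁻¹ * ‖g (pro τ) - g (pro (τ - θ))‖) ^ 2
        = θ⁻¹ * ‖g (pro τ) - g (pro (τ - θ))‖ ^ 2 := by
      field_simp
    rw [hθ2]
    calc θ⁻¹ * ‖g (pro τ) - g (pro (τ - θ))‖ ^ 2
        ≤ θ⁻¹ * (θ * ∫ s, ‖g' s‖ ^ 2 ∂μ) := by
          apply mul_le_mul_of_nonneg_left hDA (by positivity)
      _ = ∫ s, ‖g' s‖ ^ 2 ∂μ := by field_simp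
  rw [e1, e3]
  linarith


/-- `rate0` does not increase when passing to the modified path. -/
lemma rate0_gmod_le (u : EuclideanSpace ℝ (Fin d)) {g : C(unitInterval, E𝕕)} {τ θ : ℝ}
    (hθ : 0 < θ) (hθτ : θ ≤ τ) (hτ1 : τ ≤ 1) :
    rate0 u (gmod g τ θ) ≤ rate0 u g := by
  apply le_sInf
  rintro c ⟨g', hg', hg0, rfl⟩
  have h1 : rate0 u (gmod g τ θ) ≤
      ENNReal.ofReal ((1 / 2) * ∫ s in Set.Icc (0 : ℝ) 1, ‖gder g τ θ g' s‖ ^ 2) := by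
    apply sInf_le
    exact ⟨gder g τ θ g', hasL2Deriv_gmod hθ hθτ hτ1 hg',
      by rw [gmod_zero hθ.le hθτ, hg0], rfl⟩
  refine h1.trans (ENNReal.ofReal_le_ofReal ?_)
  have := energy_gmod hθ hθτ hτ1 (g' := g') hg'
  linarith

/-- Openness of the set of paths avoiding `B` up to time `a`. -/
lemma isOpen_avoid {B : Set E𝕕} (hB : IsClosed B) (a : ℝ) (ha : 0 ≤ a) :
    IsOpen {h : C(unitInterval, E𝕕) | ∀ t : unitInterval, (t:ℝ) ≤ a → h t ∉ B} := by
  rcases B.eq_empty_or_nonempty with rfl | hBne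
  · convert isOpen_univ
    ext h; simp
  · rw [Metric.isOpen_iff]
    intro h hh
    have hKc : IsCompact {t : unitInterval | (t:ℝ) ≤ a} :=
      (isClosed_le continuous_subtype_val continuous_const).isCompact
    have hKne : {t : unitInterval | (t:ℝ) ≤ a}.Nonempty := ⟨0, by exact_mod_cast ha⟩
    obtain ⟨t0, ht0K, hmin⟩ := hKc.exists_isMinOn hKne
      (((Metric.continuous_infDist_pt B).comp h.continuous).continuousOn)
    have hρ : 0 < Metric.infDist (h t0) B :=
      (hB.notMem_iff_infDist_pos hBne).1 (hh t0 ht0K)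
    refine ⟨Metric.infDist (h t0) B, hρ, fun h' hh' t ht hmem => ?_⟩
    rw [Metric.mem_ball] at hh'
    have h1 : Metric.infDist (h t) B ≤ dist (h t) (h' t) :=
      Metric.infDist_le_dist_of_mem hmem
    have h2 : dist (h t) (h' t) ≤ dist h' h := by
      rw [dist_comm (h t)]; exact ContinuousMap.dist_apply_le_dist t
    have h3 : Metric.infDist (h t0) B ≤ Metric.infDist (h t) B := hmin ht
    linarith

/-- The key construction: an open set `U` mapped into `G` by the stopping map,
on which the infimum of `rate0` is at most `rate0 u g`. -/
lemma key_open {B : Set E𝕕} (hB : IsClosed B) (u : EuclideanSpace ℝ (Fin d))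
    {G : Set C(unitInterval, E𝕕)} (hG : IsOpen G) {g : C(unitInterval, E𝕕)}
    (hgG : g ∈ G) (hgr : g ∈ Set.range (stopMap B)) :
    ∃ U : Set C(unitInterval, E𝕕), IsOpen U ∧ (∀ h ∈ U, stopMap B h ∈ G) ∧
      (⨅ f ∈ U, rate0 u f) ≤ rate0 u g := by
  obtain ⟨δ, hδ, hball⟩ := Metric.isOpen_iff.1 hG g hgG
  obtain ⟨τ, hτI, hfreeze, hcase⟩ := isStoppedPath_of_mem_range hB hgr
  rcases hcase with hnone | ⟨hhit, hbefore⟩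
  · -- the path never hits B
    refine ⟨Metric.ball g δ ∩ {h | ∀ t : unitInterval, (t:ℝ) ≤ 1 → h t ∉ B},
      (Metric.isOpen_ball).inter (isOpen_avoid hB 1 zero_le_one), ?_, ?_⟩
    · rintro h ⟨hh1, hh2⟩
      rw [stopMap_eq_self hB (fun t => hh2 t t.2.2)]
      exact hball hh1
    · exact iInf₂_le g ⟨Metric.mem_ball_self hδ, fun t _ => hnone t⟩
  · rcases eq_or_lt_of_le hτI.1 with hτ0 | hτpos
    · -- τ = 0 : the path is constant
      have hconst : ∀ t : unitInterval, g t = g 0 := by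
        have h1 : ∀ t : unitInterval, g t = g (pro 0) := by
          intro t
          rw [hfreeze t, ← hτ0, min_eq_right t.2.1]
        intro t
        rw [h1 t, ← h1 0]
      refine ⟨Metric.ball g (δ/2), Metric.isOpen_ball, ?_, ?_⟩
      · intro h hh
        rw [Metric.mem_ball] at hh
        apply hball
        rw [Metric.mem_ball]
        have hclose : ∀ t : unitInterval, ‖h t - g t‖ ≤ δ/2 := by
          intro t
          have h1 : dist (h t) (g t) ≤ dist h g := ContinuousMap.dist_apply_le_dist t
          rw [dist_eq_norm] at h1
          linarith
        have := stop_close_const (B := B) g h hconst hclose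
        have hd : dist (stopMap B h) g ≤ δ/2 := by
          rw [ContinuousMap.dist_le (by linarith)]
          intro t
          rw [dist_eq_norm]
          exact this t
        linarith
      · exact iInf₂_le g (Metric.mem_ball_self (by linarith))
    · -- 0 < τ : main construction
      obtain ⟨θ₀, hθ₀, hmod₀⟩ := exists_modulus g (c := δ/8) (by linarith)
      set θ := min θ₀ τ with hθdef
      have hθ : 0 < θ := lt_min hθ₀ hτpos
      have hθτ : θ ≤ τ := min_le_right _ _
      have hmod : ∀ s t : unitInterval, |(s:ℝ) - t| ≤ θ → ‖g s - g t‖ ≤ δ/8 :=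
        fun s t hst => hmod₀ s t (hst.trans (min_le_left _ _))
      refine ⟨Metric.ball (gmod g τ θ) (δ/8) ∩
        {h | ∀ t : unitInterval, (t:ℝ) ≤ τ - θ → h t ∉ B},
        (Metric.isOpen_ball).inter (isOpen_avoid hB (τ - θ) (by linarith)), ?_, ?_⟩
      · rintro h ⟨hh1, hh2⟩
        rw [Metric.mem_ball] at hh1
        apply hball
        rw [Metric.mem_ball]
        have hgmodg : ∀ t : unitInterval, ‖gmod g τ θ t - g t‖ ≤ 2 * (δ/8) :=
          gmod_close hθ hθτ hτI.2 (by linarith) hfreeze hmod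
        have hclose : ∀ t : unitInterval, ‖h t - g t‖ ≤ 3*δ/8 := by
          intro t
          have h1 : ‖h t - gmod g τ θ t‖ ≤ dist h (gmod g τ θ) := by
            rw [← dist_eq_norm]; exact ContinuousMap.dist_apply_le_dist t
          calc ‖h t - g t‖ = ‖(h t - gmod g τ θ t) + (gmod g τ θ t - g t)‖ := by
                rw [sub_add_sub_cancel]
            _ ≤ ‖h t - gmod g τ θ t‖ + ‖gmod g τ θ t - g t‖ := norm_add_le _ _
            _ ≤ 3*δ/8 := by
                have := hgmodg t
                linarith
        have := stop_close hB g h hτI.2 hθ hθτ hfreeze hmod hclose hh2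
        have hd : dist (stopMap B h) g ≤ 3*δ/8 + δ/8 := by
          rw [ContinuousMap.dist_le (by linarith)]
          intro t
          rw [dist_eq_norm]
          exact this t
        linarith
      · have hgmodU : gmod g τ θ ∈ Metric.ball (gmod g τ θ) (δ/8) ∩
            {h | ∀ t : unitInterval, (t:ℝ) ≤ τ - θ → h t ∉ B} :=
          ⟨Metric.mem_ball_self (by linarith),
            gmod_nohit hθ hθτ (fun t ht => hbefore t ht)⟩
        exact le_trans (iInf₂_le (gmod g τ θ) hgmodU) (rate0_gmod_le u hθ hθτ hτI.2)

/-- Auxiliary order fact about `EReal`-coercions of `ENNReal` infima. -/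
lemma ereal_le_coe_iInf₂ {α : Type*} {S : Set α} {f : α → ℝ≥0∞} {a : EReal}
    (h : ∀ x ∈ S, a ≤ (f x : EReal)) : a ≤ ((⨅ x ∈ S, f x : ℝ≥0∞) : EReal) := by
  induction a using EReal.rec with
  | bot => exact bot_le
  | top =>
    have h1 : ∀ x ∈ S, f x = ⊤ := by
      intro x hx
      have := top_le_iff.1 (h x hx)
      exact_mod_cast EReal.coe_ennreal_eq_top_iff.1 this
    have h2 : (⨅ x ∈ S, f x) = ⊤ := by
      rw [iInf₂_eq_top]; exact h1
    rw [h2, EReal.coe_ennreal_top]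
  | coe r =>
    rcases le_or_gt r 0 with hr | hr
    · exact le_trans (by exact_mod_cast hr) (EReal.coe_ennreal_nonneg _)
    · have h1 : ∀ x ∈ S, ENNReal.ofReal r ≤ f x := by
        intro x hx
        rw [← EReal.coe_ennreal_le_coe_ennreal_iff, EReal.coe_ennreal_ofReal,
          max_eq_left hr.le]
        exact h x hx
      have h2 : ENNReal.ofReal r ≤ ⨅ x ∈ S, f x := le_iInf₂ h1
      calc (r : EReal) = ((ENNReal.ofReal r : ℝ≥0∞) : EReal) := by
            rw [EReal.coe_ennreal_ofReal, max_eq_left hr.le]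
        _ ≤ _ := EReal.coe_ennreal_le_coe_ennreal_iff.2 h2

end StoppedLDP

/-- **LDP lower bound for the stopped process.** If the family `X_ε` satisfies the
large deviation lower bound with rate `I₀`, then `Φ ∘ X_ε` satisfies the lower
bound with rate `I`. -/
theorem stopped_LDP_lower_bound
    {Ω : Type*} [MeasurableSpace Ω] (P : Measure Ω) [IsProbabilityMeasure P]
    (B : Set (EuclideanSpace ℝ (Fin d))) (hB : IsClosed B)
    (u : EuclideanSpace ℝ (Fin d)) (hd : 1 ≤ d)
    (X : ℝ → Ω → C(unitInterval, EuclideanSpace ℝ (Fin d)))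
    (hX : ∀ ε ∈ Set.Ioc (0 : ℝ) 1, Measurable (X ε))
    (hlower : ∀ U : Set C(unitInterval, EuclideanSpace ℝ (Fin d)), IsOpen U →
      -((⨅ g ∈ U, rate0 u g : ℝ≥0∞) : EReal) ≤
        liminf (fun ε : ℝ => (ε : EReal) * ENNReal.log (P {ω | X ε ω ∈ U}))
          (𝓝[>] (0 : ℝ))) :
    ∀ G : Set C(unitInterval, EuclideanSpace ℝ (Fin d)), IsOpen G →
      -((⨅ g ∈ G, rateStopped B u g : ℝ≥0∞) : EReal) ≤
        liminf (fun ε : ℝ => (ε : EReal) * ENNReal.log (P {ω | stopMap B (X ε ω) ∈ G}))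
          (𝓝[>] (0 : ℝ)) := by
  intro G hG
  rw [EReal.neg_le]
  apply StoppedLDP.ereal_le_coe_iInf₂
  intro g hgG
  rw [← EReal.neg_le]
  by_cases hgr : g ∈ Set.range (stopMap B)
  · have hrs : rateStopped B u g = rate0 u g := if_pos hgr
    rw [hrs]
    obtain ⟨U, hUopen, hUmap, hUrate⟩ := StoppedLDP.key_open hB u hG hgG hgr
    have step1 : -((rate0 u g : ℝ≥0∞) : EReal) ≤ -((⨅ f ∈ U, rate0 u f : ℝ≥0∞) : EReal) := by
      rw [EReal.neg_le_neg_iff]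
      exact EReal.coe_ennreal_le_coe_ennreal_iff.2 hUrate
    refine step1.trans ((hlower U hUopen).trans ?_)
    have hev : ∀ᶠ ε : ℝ in 𝓝[>] (0:ℝ),
        (ε : EReal) * ENNReal.log (P {ω | X ε ω ∈ U}) ≤
          (ε : EReal) * ENNReal.log (P {ω | stopMap B (X ε ω) ∈ G}) := by
      filter_upwards [self_mem_nhdsWithin] with ε hε
      have hsub : {ω | X ε ω ∈ U} ⊆ {ω | stopMap B (X ε ω) ∈ G} :=
        fun ω hω => hUmap _ hω
      have hlog : ENNReal.log (P {ω | X ε ω ∈ U}) ≤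
          ENNReal.log (P {ω | stopMap B (X ε ω) ∈ G}) :=
        ENNReal.log_monotone (measure_mono hsub)
      exact mul_le_mul_of_nonneg_left hlog (EReal.coe_nonneg.2 (le_of_lt hε))
    exact Filter.liminf_le_liminf hev
  · have hrs : rateStopped B u g = ⊤ := if_neg hgr
    rw [hrs]
    simp

end
end

section
/- For every open set G ⊆ C([0,1],ℝ^d), inf_{g∈G} I(g) = inf_{g ∈ interior(Φ⁻¹(G))} I₀(g); in particular, if interior(Φ⁻¹(G)) = ∅ then I(g) = +∞ for every g ∈ G. -/
open MeasureTheory Filter Topology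
open scoped ENNReal NNReal Classical

noncomputable section

variable {d : ℕ}

def hitSet (B : Set (EuclideanSpace ℝ (Fin d)))
    (f : C(unitInterval, EuclideanSpace ℝ (Fin d))) : Set ℝ :=
  {t : ℝ | ∃ ht : t ∈ Set.Icc (0 : ℝ) 1, f ⟨t, ht⟩ ∈ B} ∪ {1}

lemma hitTime_def (B : Set (EuclideanSpace ℝ (Fin d)))
    (f : C(unitInterval, EuclideanSpace ℝ (Fin d))) : hitTime B f = sInf (hitSet B f) := rfl

lemma hitSet_subset_Icc (B : Set (EuclideanSpace ℝ (Fin d)))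
    (f : C(unitInterval, EuclideanSpace ℝ (Fin d))) : hitSet B f ⊆ Set.Icc 0 1 := by
  rintro t (⟨ht, _⟩ | ht)
  · exact ht
  · rw [Set.mem_singleton_iff] at ht; subst ht; exact ⟨zero_le_one, le_refl 1⟩

lemma hitSet_nonempty (B : Set (EuclideanSpace ℝ (Fin d)))
    (f : C(unitInterval, EuclideanSpace ℝ (Fin d))) : (hitSet B f).Nonempty :=
  ⟨1, Or.inr rfl⟩

lemma hitSet_bddBelow (B : Set (EuclideanSpace ℝ (Fin d)))
    (f : C(unitInterval, EuclideanSpace ℝ (Fin d))) : BddBelow (hitSet B f) :=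
  ⟨0, fun t ht => (hitSet_subset_Icc B f ht).1⟩

lemma hitTime_mem_Icc (B : Set (EuclideanSpace ℝ (Fin d)))
    (f : C(unitInterval, EuclideanSpace ℝ (Fin d))) : hitTime B f ∈ Set.Icc (0:ℝ) 1 := by
  constructor
  · exact le_csInf (hitSet_nonempty B f) fun t ht => (hitSet_subset_Icc B f ht).1
  · exact csInf_le (hitSet_bddBelow B f) (Or.inr rfl)

lemma not_mem_of_lt_hitTime {B : Set (EuclideanSpace ℝ (Fin d))}
    {f : C(unitInterval, EuclideanSpace ℝ (Fin d))} {t : ℝ} (ht : t ∈ Set.Icc (0:ℝ) 1)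
    (h : t < hitTime B f) : f ⟨t, ht⟩ ∉ B := by
  intro hb
  exact absurd (csInf_le (hitSet_bddBelow B f) (Or.inl ⟨ht, hb⟩)) (not_le.2 h)

lemma stopMap_apply (B : Set (EuclideanSpace ℝ (Fin d)))
    (f : C(unitInterval, EuclideanSpace ℝ (Fin d))) (t : unitInterval) :
    stopMap B f t = f (Set.projIcc (0 : ℝ) 1 zero_le_one (min t.1 (hitTime B f))) := rfl

lemma mem_interior_preimage {B : Set (EuclideanSpace ℝ (Fin d))} (hB : IsClosed B)
    {G : Set C(unitInterval, EuclideanSpace ℝ (Fin d))} (hG : IsOpen G)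
    {g : C(unitInterval, EuclideanSpace ℝ (Fin d))}
    (hgr : g ∈ Set.range (stopMap B)) (hgG : g ∈ G) :
    g ∈ interior (stopMap B ⁻¹' G) := by
  obtain ⟨f, rfl⟩ := hgr
  set g := stopMap B f with hg
  set τ := hitTime B f with hτ
  have hτI : τ ∈ Set.Icc (0:ℝ) 1 := hitTime_mem_Icc B f
  set F : ℝ → EuclideanSpace ℝ (Fin d) :=
    fun s => f (Set.projIcc 0 1 zero_le_one s) with hF
  have hFc : Continuous F := f.continuous.comp continuous_projIcc
  have hgt : ∀ t : unitInterval, g t = F (min t.1 τ) := fun t => rfl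
  obtain ⟨ε, hε, hball⟩ := Metric.isOpen_iff.1 hG g hgG
  obtain ⟨δ, hδ, hδ'⟩ := Metric.continuousAt_iff.1 (hFc.continuousAt (x := τ)) (ε/4) (by positivity)
  have hρ : ∃ ρ > 0, ∀ s : ℝ, 0 ≤ s → s ≤ τ - δ/2 → ∀ y ∈ B, ρ ≤ dist (F s) y := by
    rcases Set.eq_empty_or_nonempty B with hBe | hBne
    · exact ⟨1, one_pos, fun s _ _ y hy => absurd hy (by simp [hBe])⟩
    rcases lt_or_ge (τ - δ/2) 0 with hneg | hpos
    · exact ⟨1, one_pos, fun s h0 h1 _ _ => absurd (h0.trans h1) (not_le.2 hneg)⟩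
    · have hK : IsCompact (Set.Icc (0:ℝ) (τ - δ/2)) := isCompact_Icc
      have hKne : (Set.Icc (0:ℝ) (τ - δ/2)).Nonempty := ⟨0, le_refl 0, hpos⟩
      have hφc : ContinuousOn (fun s => Metric.infDist (F s) B) (Set.Icc 0 (τ-δ/2)) :=
        ((Metric.continuous_infDist_pt B).comp hFc).continuousOn
      obtain ⟨s₀, hs₀K, hmin⟩ := hK.exists_isMinOn hKne hφc
      have hs₀I : s₀ ∈ Set.Icc (0:ℝ) 1 := ⟨hs₀K.1, hs₀K.2.trans (by linarith [hτI.2])⟩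
      have hs₀pos : 0 < Metric.infDist (F s₀) B := by
        rw [← (hB.notMem_iff_infDist_pos hBne)]
        have hFs : F s₀ = f ⟨s₀, hs₀I⟩ :=
          congrArg f (Set.projIcc_of_mem _ hs₀I)
        rw [hFs]
        exact not_mem_of_lt_hitTime hs₀I (by rw [← hτ]; linarith [hs₀K.2])
      refine ⟨Metric.infDist (F s₀) B, hs₀pos, fun s h0 h1 y hy => ?_⟩
      exact le_trans (hmin ⟨h0, h1⟩) (Metric.infDist_le_dist_of_mem hy)
  obtain ⟨ρ, hρpos, hρ⟩ := hρ
  rw [mem_interior_iff_mem_nhds, Metric.mem_nhds_iff]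
  refine ⟨min ρ (ε/4), lt_min hρpos (by positivity), fun k hk => ?_⟩
  rw [Metric.mem_ball] at hk
  have hkρ : dist k g < ρ := hk.trans_le (min_le_left _ _)
  have hkε : dist k g < ε/4 := hk.trans_le (min_le_right _ _)
  set σ := hitTime B k with hσ
  have hσI : σ ∈ Set.Icc (0:ℝ) 1 := hitTime_mem_Icc B k
  have hσge : τ - δ/2 ≤ σ := by
    refine le_csInf (hitSet_nonempty B k) ?_
    rintro s (⟨hs, hsB⟩ | hs1)
    · by_contra hlt
      push_neg at hlt
      have h1 : dist (k ⟨s, hs⟩) (g ⟨s, hs⟩) < ρ :=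
        lt_of_le_of_lt (ContinuousMap.dist_apply_le_dist _) hkρ
      have hsτ : s ≤ τ := by linarith
      have h2 : g ⟨s, hs⟩ = F s := by
        rw [hgt ⟨s, hs⟩]; exact congrArg F (min_eq_left hsτ)
      have h3 := hρ s hs.1 (le_of_lt hlt) _ hsB
      rw [← h2] at h3
      rw [dist_comm] at h1
      linarith [h3.trans (le_of_eq rfl)]
    · rw [Set.mem_singleton_iff] at hs1; subst hs1; linarith [hτI.2]
  apply hball
  rw [Metric.mem_ball, ContinuousMap.dist_lt_iff hε]
  intro t
  have htI := t.2
  have hminI : min t.1 σ ∈ Set.Icc (0:ℝ) 1 :=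
    ⟨le_min htI.1 hσI.1, (min_le_left _ _).trans htI.2⟩
  set p : unitInterval := Set.projIcc 0 1 zero_le_one (min t.1 σ) with hp
  have hpv : (p : ℝ) = min t.1 σ := congrArg Subtype.val (Set.projIcc_of_mem _ hminI)
  have e1 : stopMap B k t = k p := rfl
  have e2 : dist (k p) (g p) < ε/4 :=
    lt_of_le_of_lt (ContinuousMap.dist_apply_le_dist _) hkε
  have e3 : g p = F (min (min t.1 σ) τ) := by rw [hgt p, hpv]
  have e4 : dist (g p) (g t) < ε/2 + ε/4 := by
    rw [e3, hgt t]
    rcases le_or_gt t.1 σ with hts | hts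
    · rw [min_eq_left hts]
      have : (0:ℝ) < ε/2 + ε/4 := by positivity
      simpa using this
    · have ha1 : min σ τ ≤ τ := min_le_right _ _
      have ha2 : τ - δ/2 ≤ min σ τ := le_min hσge (by linarith)
      have hb1 : min t.1 τ ≤ τ := min_le_right _ _
      have hb2 : τ - δ/2 ≤ min t.1 τ := le_min (by linarith) (by linarith)
      rw [min_comm t.1 σ, min_assoc] at *
      have da : dist (F (min σ (min t.1 τ))) (F τ) < ε/4 := by
        apply hδ'
        rw [Real.dist_eq, abs_sub_lt_iff]
        constructor
        · have : min σ (min t.1 τ) ≤ τ := le_trans (min_le_right _ _) hb1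
          linarith
        · have : τ - δ/2 ≤ min σ (min t.1 τ) := le_min hσge hb2
          linarith
      have db : dist (F τ) (F (min t.1 τ)) < ε/4 := by
        rw [dist_comm]; apply hδ'
        rw [Real.dist_eq, abs_sub_lt_iff]
        constructor <;> [skip; skip] <;> linarith
      calc dist (F (min σ (min t.1 τ))) (F (min t.1 τ))
          ≤ dist (F (min σ (min t.1 τ))) (F τ) + dist (F τ) (F (min t.1 τ)) := dist_triangle _ _ _
        _ < ε/2 + ε/4 := by linarith
  calc dist (stopMap B k t) (g t) ≤ dist (k p) (g p) + dist (g p) (g t) := by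
        rw [e1]; exact dist_triangle _ _ _
    _ < ε/4 + (ε/2 + ε/4) := by linarith
    _ = ε := by ring


lemma rate0_stopMap_le (B : Set (EuclideanSpace ℝ (Fin d)))
    (u : EuclideanSpace ℝ (Fin d)) (h : C(unitInterval, EuclideanSpace ℝ (Fin d))) :
    rate0 u (stopMap B h) ≤ rate0 u h := by
  apply sInf_le_sInf_of_isCoinitialFor
  rintro c ⟨h', ⟨hmem, hFTC⟩, h0, rfl⟩
  set τ := hitTime B h with hτdef
  have hτI : τ ∈ Set.Icc (0:ℝ) 1 := hitTime_mem_Icc B h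
  set k' : ℝ → EuclideanSpace ℝ (Fin d) := Set.indicator (Set.Iio τ) h' with hk'
  haveI : IsFiniteMeasure (volume.restrict (Set.Icc (0:ℝ) 1)) :=
    ⟨by rw [Measure.restrict_apply_univ]; simp [Real.volume_Icc]⟩
  have hmemk : MemLp k' 2 (volume.restrict (Set.Icc (0:ℝ) 1)) :=
    hmem.indicator measurableSet_Iio
  have hint : IntegrableOn k' (Set.Icc (0:ℝ) 1) volume := hmemk.integrable one_le_two
  have hΦ0 : stopMap B h 0 = h 0 := by
    rw [stopMap_apply]
    refine congrArg h (Subtype.ext ?_)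
    have h0v : ((0:unitInterval):ℝ) = 0 := rfl
    show (Set.projIcc 0 1 zero_le_one (min ((0:unitInterval):ℝ) τ) : ℝ) = ((0:unitInterval):ℝ)
    rw [h0v, min_eq_left hτI.1]
    exact congrArg Subtype.val (Set.projIcc_of_mem _ (Set.left_mem_Icc.2 zero_le_one))
  have hFTCk : ∀ t : unitInterval,
      stopMap B h t = stopMap B h 0 + ∫ s in (0:ℝ)..(t:ℝ), k' s := by
    intro t
    have hmI : min (t:ℝ) τ ∈ Set.Icc (0:ℝ) 1 :=
      ⟨le_min t.2.1 hτI.1, (min_le_left _ _).trans t.2.2⟩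
    have hmτ : min (t:ℝ) τ ≤ τ := min_le_right _ _
    have hmt : min (t:ℝ) τ ≤ (t:ℝ) := min_le_left _ _
    have hpm : ((Set.projIcc (0:ℝ) 1 zero_le_one (min (t:ℝ) τ) : unitInterval) : ℝ)
        = min (t:ℝ) τ := congrArg Subtype.val (Set.projIcc_of_mem _ hmI)
    have hL := hFTC (Set.projIcc (0:ℝ) 1 zero_le_one (min (t:ℝ) τ))
    rw [hpm] at hL
    have hae : ∀ᵐ s : ℝ, s ≠ τ := by
      rw [ae_iff]
      simpa using measure_singleton τ
    have hI1 : (∫ s in (0:ℝ)..(min (t:ℝ) τ), k' s) = ∫ s in (0:ℝ)..(min (t:ℝ) τ), h' s := by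
      apply intervalIntegral.integral_congr_ae
      filter_upwards [hae] with s hsne hsmem
      rw [Set.uIoc_of_le hmI.1] at hsmem
      have hsτ : s < τ := lt_of_le_of_ne (hsmem.2.trans hmτ) hsne
      rw [hk', Set.indicator_of_mem (Set.mem_Iio.2 hsτ)]
    have hI2 : (∫ s in (min (t:ℝ) τ)..(t:ℝ), k' s) = 0 := by
      rcases le_or_gt (t:ℝ) τ with hc | hc
      · rw [min_eq_left hc, intervalIntegral.integral_same]
      · rw [min_eq_right hc.le]
        rw [intervalIntegral.integral_congr (g := fun _ => 0), intervalIntegral.integral_zero]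
        intro s hsmem
        rw [Set.uIcc_of_le hc.le] at hsmem
        exact Set.indicator_of_notMem (by simpa using not_lt.2 hsmem.1) h'
    have hsplit : (∫ s in (0:ℝ)..(t:ℝ), k' s)
        = (∫ s in (0:ℝ)..(min (t:ℝ) τ), k' s) + ∫ s in (min (t:ℝ) τ)..(t:ℝ), k' s := by
      symm
      apply intervalIntegral.integral_add_adjacent_intervals
      · apply (hint.mono_set ?_).intervalIntegrable
        rw [Set.uIcc_of_le hmI.1]
        exact Set.Icc_subset_Icc le_rfl hmI.2
      · apply (hint.mono_set ?_).intervalIntegrable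
        rw [Set.uIcc_of_le hmt]
        exact Set.Icc_subset_Icc hmI.1 t.2.2
    have hIeq : (∫ s in (0:ℝ)..(t:ℝ), k' s) = ∫ s in (0:ℝ)..(min (t:ℝ) τ), h' s := by
      rw [hsplit, hI1, hI2, add_zero]
    rw [hΦ0, hIeq, stopMap_apply]
    exact hL
  have hnormsq : (fun s => ‖k' s‖^2) = Set.indicator (Set.Iio τ) (fun s => ‖h' s‖^2) := by
    funext s
    by_cases hs : s ∈ Set.Iio τ
    · rw [hk', Set.indicator_of_mem hs, Set.indicator_of_mem hs]
    · rw [hk', Set.indicator_of_notMem hs, Set.indicator_of_notMem hs]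
      simp
  have hh2 : Integrable (fun s => ‖h' s‖^2) (volume.restrict (Set.Icc (0:ℝ) 1)) := by
    have hr := hmem.integrable_norm_rpow (by norm_num) (by norm_num)
    refine hr.congr (Filter.Eventually.of_forall fun s => ?_)
    show ‖h' s‖ ^ ((2:ℝ≥0∞).toReal) = ‖h' s‖ ^ (2:ℕ)
    rw [ENNReal.toReal_ofNat, ← Real.rpow_natCast]
    norm_num
  have hk2 : Integrable (fun s => ‖k' s‖^2) (volume.restrict (Set.Icc (0:ℝ) 1)) := by
    rw [hnormsq]
    exact hh2.indicator measurableSet_Iio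
  have hEle : (∫ s in Set.Icc (0:ℝ) 1, ‖k' s‖^2) ≤ ∫ s in Set.Icc (0:ℝ) 1, ‖h' s‖^2 := by
    apply integral_mono hk2 hh2
    intro s
    show ‖Set.indicator (Set.Iio τ) h' s‖^2 ≤ ‖h' s‖^2
    by_cases hs : s ∈ Set.Iio τ
    · rw [Set.indicator_of_mem hs]
    · rw [Set.indicator_of_notMem hs]
      have hnn : (0:ℝ) ≤ ‖h' s‖^2 := by positivity
      simpa using hnn
  refine ⟨ENNReal.ofReal ((1/2) * ∫ s in Set.Icc (0:ℝ) 1, ‖k' s‖^2),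
    ⟨k', ⟨hmemk, hFTCk⟩, by rw [hΦ0]; exact h0, rfl⟩, ?_⟩
  apply ENNReal.ofReal_le_ofReal
  exact mul_le_mul_of_nonneg_left hEle (by norm_num)

/-- For every open set `G`, the infimum of the rate function `I` over `G` equals the
infimum of `I₀` over the interior of `Φ⁻¹(G)`; in particular, if this interior is
empty, then `I = +∞` on all of `G`. -/
theorem rate_inf_open (B : Set (EuclideanSpace ℝ (Fin d))) (hB : IsClosed B)
    (u : EuclideanSpace ℝ (Fin d)) (hd : 1 ≤ d)
    (G : Set C(unitInterval, EuclideanSpace ℝ (Fin d))) (hG : IsOpen G) :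
    ((⨅ g ∈ G, rateStopped B u g) = (⨅ g ∈ interior (stopMap B ⁻¹' G), rate0 u g)) ∧
      (interior (stopMap B ⁻¹' G) = ∅ → ∀ g ∈ G, rateStopped B u g = ⊤) := by
  have main : (⨅ g ∈ G, rateStopped B u g)
      = ⨅ g ∈ interior (stopMap B ⁻¹' G), rate0 u g := by
    apply le_antisymm
    · refine le_iInf₂ fun h hh => ?_
      have hG' : stopMap B h ∈ G := Set.mem_preimage.1 (interior_subset hh)
      refine iInf₂_le_of_le (stopMap B h) hG' ?_
      have : rateStopped B u (stopMap B h) = rate0 u (stopMap B h) := by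
        simp only [rateStopped, if_pos (Set.mem_range_self h)]
      rw [this]
      exact rate0_stopMap_le B u h
    · refine le_iInf₂ fun g hg => ?_
      by_cases hr : g ∈ Set.range (stopMap B)
      · have hint := mem_interior_preimage hB hG hr hg
        refine iInf₂_le_of_le g hint ?_
        simp only [rateStopped, if_pos hr]
        exact le_rfl
      · simp only [rateStopped, if_neg hr]
        exact le_top
  refine ⟨main, fun hempty g hg => ?_⟩
  have h1 : (⨅ g ∈ G, rateStopped B u g) = ⊤ := by
    rw [main, hempty]
    simp
  refine le_antisymm le_top ?_
  rw [← h1]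
  exact iInf₂_le g hg

end
end

section
/- Let f ∈ C([0,1],ℝ^d) satisfy f(t) ∉ B for all t ∈ [0,1). Then Φ(f) = f and Φ is continuous at f: for every sequence f_n ∈ C([0,1],ℝ^d) with sup_{t∈[0,1]}‖f_n(t)−f(t)‖ → 0 one has sup_{t∈[0,1]}‖Φ(f_n)(t)−f(t)‖ → 0. -/
open MeasureTheory Filter Topology
open scoped ENNReal NNReal Classical

noncomputable section

variable {d : ℕ}

lemma hitTime_nonneg (B : Set (EuclideanSpace ℝ (Fin d)))
    (g : C(unitInterval, EuclideanSpace ℝ (Fin d))) : 0 ≤ hitTime B g := by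
  unfold hitTime
  apply le_csInf ⟨1, Set.mem_union_right _ (Set.mem_singleton 1)⟩
  rintro x (⟨hx, -⟩ | rfl)
  · exact hx.1
  · exact zero_le_one

lemma hitTime_le_one (B : Set (EuclideanSpace ℝ (Fin d)))
    (g : C(unitInterval, EuclideanSpace ℝ (Fin d))) : hitTime B g ≤ 1 := by
  unfold hitTime
  apply csInf_le _ (Set.mem_union_right _ (Set.mem_singleton 1))
  refine ⟨0, ?_⟩
  rintro x (⟨hx, -⟩ | rfl)
  · exact hx.1
  · exact zero_le_one

lemma le_hitTime {B : Set (EuclideanSpace ℝ (Fin d))}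
    {g : C(unitInterval, EuclideanSpace ℝ (Fin d))} {s : ℝ} (hs : s ≤ 1)
    (h : ∀ t (ht : t ∈ Set.Icc (0:ℝ) 1), t < s → g ⟨t, ht⟩ ∉ B) : s ≤ hitTime B g := by
  unfold hitTime
  apply le_csInf ⟨1, Set.mem_union_right _ (Set.mem_singleton 1)⟩
  rintro x (⟨hx, hxB⟩ | rfl)
  · by_contra hlt
    exact h x hx (lt_of_not_ge hlt) hxB
  · exact hs

lemma stopMap_eq_of {B : Set (EuclideanSpace ℝ (Fin d))}
    {g : C(unitInterval, EuclideanSpace ℝ (Fin d))}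
    (h : hitTime B g = 1) : stopMap B g = g := by
  ext t
  simp only [stopMap, ContinuousMap.coe_mk, h, min_eq_left t.2.2]
  rw [Set.projIcc_of_mem zero_le_one t.2]

/-- If `f` avoids `B` on `[0,1)`, then `Φ(f) = f` and `Φ` is (sequentially) continuous
at `f`. -/
theorem stopMap_continuousAt_of_avoids
    (B : Set (EuclideanSpace ℝ (Fin d))) (hB : IsClosed B) (hd : 1 ≤ d)
    (f : C(unitInterval, EuclideanSpace ℝ (Fin d)))
    (hf : ∀ t : unitInterval, (t : ℝ) < 1 → f t ∉ B) :
    stopMap B f = f ∧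
      ∀ fn : ℕ → C(unitInterval, EuclideanSpace ℝ (Fin d)),
        Filter.Tendsto (fun n => ‖fn n - f‖) Filter.atTop (nhds 0) →
        Filter.Tendsto (fun n => ‖stopMap B (fn n) - f‖) Filter.atTop (nhds 0) := by
  have hτf : hitTime B f = 1 :=
    le_antisymm (hitTime_le_one _ _) (le_hitTime le_rfl fun t ht hlt => hf ⟨t, ht⟩ hlt)
  refine ⟨stopMap_eq_of hτf, fun fn hconv => ?_⟩
  rcases B.eq_empty_or_nonempty with rfl | hBne
  · have heq : ∀ n, stopMap (∅ : Set (EuclideanSpace ℝ (Fin d))) (fn n) = fn n := fun n =>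
      stopMap_eq_of (le_antisymm (hitTime_le_one _ _) (le_hitTime le_rfl (by simp)))
    simpa [heq] using hconv
  rw [Metric.tendsto_atTop] at hconv ⊢
  intro ε hε
  obtain ⟨δ, hδ, hmod⟩ := Metric.uniformContinuous_iff.mp
    (CompactSpace.uniformContinuous_of_continuous f.continuous) (ε/2) (by positivity)
  set s : ℝ := max 0 (1 - δ/2) with hs
  have hs0 : (0:ℝ) ≤ s := le_max_left _ _
  have hs1 : s < 1 := max_lt one_pos (by linarith)
  have hs' : 1 - s ≤ δ/2 := by
    have := le_max_right 0 (1 - δ/2); linarith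
  set K : Set unitInterval := {t | (t:ℝ) ≤ s} with hK
  have hKc : IsCompact K := (isClosed_le continuous_subtype_val continuous_const).isCompact
  have hKne : K.Nonempty := ⟨⟨0, le_refl 0, zero_le_one⟩, hs0⟩
  obtain ⟨t₀, ht₀K, ht₀min⟩ := hKc.exists_isMinOn hKne
    (((Metric.continuous_infDist_pt B).comp f.continuous).continuousOn)
  have hr : 0 < Metric.infDist (f t₀) B := by
    have hnot : f t₀ ∉ B := hf t₀ (lt_of_le_of_lt ht₀K hs1)
    rwa [← IsClosed.notMem_iff_infDist_pos hB hBne]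
  set r := Metric.infDist (f t₀) B with hrdef
  obtain ⟨N, hN⟩ := hconv (min (ε/2) r) (lt_min (by positivity) hr)
  refine ⟨N, fun n hn => ?_⟩
  have hnorm : ‖fn n - f‖ < min (ε/2) r := by
    have := hN n hn
    rwa [Real.dist_eq, sub_zero, abs_of_nonneg (norm_nonneg _)] at this
  have happ : ∀ t : unitInterval, ‖fn n t - f t‖ < min (ε/2) r := fun t => by
    calc ‖fn n t - f t‖ = ‖(fn n - f) t‖ := by simp
      _ ≤ ‖fn n - f‖ := ContinuousMap.norm_coe_le_norm _ t
      _ < _ := hnorm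
  have hτ : s ≤ hitTime B (fn n) := by
    refine le_hitTime hs1.le fun t ht hts hBmem => ?_
    have hmem : (⟨t, ht⟩ : unitInterval) ∈ K := le_of_lt hts
    have h1 : r ≤ Metric.infDist (f ⟨t, ht⟩) B := isMinOn_iff.mp ht₀min _ hmem
    have h2 : Metric.infDist (f ⟨t, ht⟩) B ≤ dist (f ⟨t, ht⟩) (fn n ⟨t, ht⟩) :=
      Metric.infDist_le_dist_of_mem hBmem
    have h3 : dist (f ⟨t, ht⟩) (fn n ⟨t, ht⟩) < r := by
      rw [dist_eq_norm, norm_sub_rev]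
      exact (happ _).trans_le (min_le_right _ _)
    linarith
  have hτ0 : 0 ≤ hitTime B (fn n) := hitTime_nonneg _ _
  rw [Real.dist_eq, sub_zero, abs_of_nonneg (norm_nonneg _)]
  rw [ContinuousMap.norm_lt_iff _ hε]
  intro t
  rw [ContinuousMap.sub_apply]
  set m : ℝ := min t.1 (hitTime B (fn n)) with hm
  have hmIcc : m ∈ Set.Icc (0:ℝ) 1 := ⟨le_min t.2.1 hτ0, (min_le_left _ _).trans t.2.2⟩
  set u : unitInterval := ⟨m, hmIcc⟩ with hu
  have hsm : stopMap B (fn n) t = fn n u := by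
    simp only [stopMap, ContinuousMap.coe_mk]
    rw [Set.projIcc_of_mem zero_le_one hmIcc]
  have h1 : ‖fn n u - f u‖ < ε/2 := (happ u).trans_le (min_le_left _ _)
  have h2 : ‖f u - f t‖ < ε/2 := by
    have hd1 : dist u t < δ := by
      rw [Subtype.dist_eq, Real.dist_eq, abs_sub_comm,
        abs_of_nonneg (by simp [hu, hm, min_le_left] : (0:ℝ) ≤ t.1 - u.1)]
      have hms : min t.1 s ≤ m := min_le_min le_rfl hτ
      have hle : t.1 - m ≤ 1 - s := by
        rcases le_total t.1 s with h | h
        · rw [min_eq_left h] at hms; linarith [hs1.le]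
        · rw [min_eq_right h] at hms; linarith [t.2.2]
      simp only [hu]
      linarith
    have := hmod hd1
    rwa [dist_eq_norm] at this
  calc ‖stopMap B (fn n) t - f t‖ = ‖fn n u - f t‖ := by rw [hsm]
    _ ≤ ‖fn n u - f u‖ + ‖f u - f t‖ := by
        rw [← dist_eq_norm, ← dist_eq_norm, ← dist_eq_norm]; exact dist_triangle _ _ _
    _ < ε/2 + ε/2 := add_lt_add h1 h2
    _ = ε := by ring

end
end
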